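/- Let γ_n(t) be p×p matrix functions with γ_{2n} = H_n^{(0)}(H_{n-1}^{(1)})^{-1} and γ_{2n+1} = H_n^{(1)}(H_n^{(0)})^{-1} for invertible H's. Then the non-abelian Volterra lattice ∂_t γ_n = γ_{n+1} γ_n - γ_n γ_{n-1} is equivalent to the bilinear system (H_n^{(0)})^{-1} ∂_t H_n^{(0)} - (H_{n-1}^{(1)})^{-1} ∂_t H_{n-1}^{(1)} = (H_n^{(0)})^{-1} H_n^{(1)} - (H_{n-1}^{(0)})^{-1} H_{n-1}^{(1)} and (H_n^{(1)})^{-1} ∂_t H_n^{(1)} - (H_n^{(0)})^{-1} ∂_t H_n^{(0)} = (H_n^{(1)})^{-1} H_{n+1}^{(0)} - (H_{n-1}^{(1)})^{-1} H_n^{(0)}. -/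

import Mathlib

/-- Entrywise derivative of a matrix-valued function of `t`. -/
noncomputable def matDeriv19 {p : ℕ} (f : ℝ → Matrix (Fin p) (Fin p) ℝ) (t : ℝ) :
    Matrix (Fin p) (Fin p) ℝ :=
  Matrix.of fun i j => deriv (fun s => f s i j) t

section Aux

variable {p : ℕ}

private lemma eDiff_mul19 {f g : ℝ → Matrix (Fin p) (Fin p) ℝ} {t : ℝ}
    (hf : ∀ i j, DifferentiableAt ℝ (fun s => f s i j) t)
    (hg : ∀ i j, DifferentiableAt ℝ (fun s => g s i j) t) :
    ∀ i j, DifferentiableAt ℝ (fun s => (f s * g s) i j) t := by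
  intro i j
  simp only [Matrix.mul_apply]
  exact DifferentiableAt.fun_sum fun k _ => (hf i k).mul (hg k j)

private lemma eDiff_det19 {f : ℝ → Matrix (Fin p) (Fin p) ℝ} {t : ℝ}
    (hf : ∀ i j, DifferentiableAt ℝ (fun s => f s i j) t) :
    DifferentiableAt ℝ (fun s => (f s).det) t := by
  simp only [Matrix.det_apply]
  refine DifferentiableAt.fun_sum fun σ _ => ?_
  simp only [Units.smul_def, zsmul_eq_mul]
  exact (DifferentiableAt.fun_finsetProd fun i _ => hf (σ i) i).const_mul _

private lemma eDiff_inv19 {f : ℝ → Matrix (Fin p) (Fin p) ℝ} {t : ℝ}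
    (hf : ∀ i j, DifferentiableAt ℝ (fun s => f s i j) t)
    (hu : ∀ s, IsUnit (f s)) :
    ∀ i j, DifferentiableAt ℝ (fun s => Ring.inverse (f s) i j) t := by
  intro i j
  have hfun : ∀ s, Ring.inverse (f s) i j = ((f s).det)⁻¹ * (f s).adjugate i j := by
    intro s
    rw [← Matrix.nonsing_inv_eq_ringInverse, Matrix.inv_def, Ring.inverse_eq_inv]
    simp [Matrix.smul_apply, smul_eq_mul]
  simp only [hfun]
  have hdet : DifferentiableAt ℝ (fun s => (f s).det) t := eDiff_det19 hf
  have hdetne : (f t).det ≠ 0 := by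
    have h := (Matrix.isUnit_iff_isUnit_det _).mp (hu t)
    exact h.ne_zero
  have hadj : DifferentiableAt ℝ (fun s => (f s).adjugate i j) t := by
    simp only [Matrix.adjugate_apply]
    refine eDiff_det19 (f := fun s => (f s).updateRow j (Pi.single i 1)) ?_
    intro a b
    by_cases hab : a = j
    · simp only [Matrix.updateRow_apply, hab, if_pos rfl]
      exact differentiableAt_const _
    · simp only [Matrix.updateRow_apply, if_neg hab]
      exact hf a b
  exact (hdet.inv hdetne).mul hadj

private lemma matDeriv19_mul {f g : ℝ → Matrix (Fin p) (Fin p) ℝ} {t : ℝ}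
    (hf : ∀ i j, DifferentiableAt ℝ (fun s => f s i j) t)
    (hg : ∀ i j, DifferentiableAt ℝ (fun s => g s i j) t) :
    matDeriv19 (fun s => f s * g s) t = matDeriv19 f t * g t + f t * matDeriv19 g t := by
  ext i j
  simp only [matDeriv19, Matrix.of_apply, Matrix.add_apply, Matrix.mul_apply]
  rw [deriv_fun_sum (A := fun k s => f s i k * g s k j) (u := Finset.univ) fun k _ => ((hf i k).mul (hg k j) :
    DifferentiableAt ℝ (fun s => f s i k * g s k j) t), ← Finset.sum_add_distrib]
  refine Finset.sum_congr rfl fun k _ => ?_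
  rw [deriv_fun_mul (hf i k) (hg k j)]

private lemma matDeriv19_one (t : ℝ) :
    matDeriv19 (fun _ : ℝ => (1 : Matrix (Fin p) (Fin p) ℝ)) t = 0 := by
  ext i j
  simp [matDeriv19]

private lemma matDeriv19_inv {f : ℝ → Matrix (Fin p) (Fin p) ℝ} {t : ℝ}
    (hf : ∀ i j, DifferentiableAt ℝ (fun s => f s i j) t)
    (hu : ∀ s, IsUnit (f s)) :
    matDeriv19 (fun s => Ring.inverse (f s)) t
      = -(Ring.inverse (f t) * matDeriv19 f t * Ring.inverse (f t)) := by
  have hi := eDiff_inv19 hf hu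
  have h := matDeriv19_mul hi hf
  rw [show (fun s => Ring.inverse (f s) * f s)
      = (fun _ : ℝ => (1 : Matrix (Fin p) (Fin p) ℝ)) from
        funext fun s => Ring.inverse_mul_cancel _ (hu s), matDeriv19_one] at h
  have h2 : matDeriv19 (fun s => Ring.inverse (f s)) t * f t
      = -(Ring.inverse (f t) * matDeriv19 f t) := eq_neg_of_add_eq_zero_left h.symm
  have h3 := congrArg (fun X => X * Ring.inverse (f t)) h2
  simpa only [Ring.mul_inverse_cancel_right _ _ (hu t), neg_mul] using h3

private lemma matDeriv19_mul_inv (F G : ℝ → Matrix (Fin p) (Fin p) ℝ) (t : ℝ)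
    (hF : ∀ i j, DifferentiableAt ℝ (fun s => F s i j) t)
    (hG : ∀ i j, DifferentiableAt ℝ (fun s => G s i j) t)
    (hu : ∀ s, IsUnit (G s)) :
    matDeriv19 (fun s => F s * Ring.inverse (G s)) t
      = matDeriv19 F t * Ring.inverse (G t)
        - F t * Ring.inverse (G t) * matDeriv19 G t * Ring.inverse (G t) := by
  rw [matDeriv19_mul hF (eDiff_inv19 hG hu), matDeriv19_inv hG hu]
  simp only [mul_neg, sub_eq_add_neg, mul_assoc]

private lemma volterra_aux19 {R : Type*} [Ring R] (A B C D A' B' : R)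
    (hA : IsUnit A) (hB : IsUnit B) :
    A' * Ring.inverse B - A * Ring.inverse B * B' * Ring.inverse B
      = C * Ring.inverse A * (A * Ring.inverse B) - A * Ring.inverse B * (B * Ring.inverse D)
    ↔ Ring.inverse A * A' - Ring.inverse B * B'
        = Ring.inverse A * C - Ring.inverse D * B := by
  have cA1 : ∀ y : R, Ring.inverse A * (A * y) = y :=
    fun y => Ring.inverse_mul_cancel_left A y hA
  have cA2 : ∀ y : R, A * (Ring.inverse A * y) = y :=
    fun y => Ring.mul_inverse_cancel_left A y hA
  have cB1 : ∀ y : R, Ring.inverse B * (B * y) = y :=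
    fun y => Ring.inverse_mul_cancel_left B y hB
  have cB2 : ∀ y : R, B * (Ring.inverse B * y) = y :=
    fun y => Ring.mul_inverse_cancel_left B y hB
  have cB3 : Ring.inverse B * B = 1 := Ring.inverse_mul_cancel B hB
  have cB4 : B * Ring.inverse B = 1 := Ring.mul_inverse_cancel B hB
  constructor
  · intro h
    have h2 := congrArg (fun X => Ring.inverse A * (X * B)) h
    simp only [mul_sub, sub_mul, mul_assoc, cA1, cA2, cB1, cB2, cB3, cB4,
      mul_one, one_mul] at h2 ⊢
    exact h2
  · intro h
    have h2 := congrArg (fun X => A * (X * Ring.inverse B)) h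
    simp only [mul_sub, sub_mul, mul_assoc, cA1, cA2, cB1, cB2, cB3, cB4,
      mul_one, one_mul] at h2 ⊢
    exact h2

end Aux

/-- With `γ_{2n} = H_n^{(0)}(H_{n-1}^{(1)})⁻¹` and `γ_{2n+1} = H_n^{(1)}(H_n^{(0)})⁻¹` for
smooth invertible matrix functions `H_n^{(0)}, H_n^{(1)}`, the non-abelian Volterra lattice
`∂_t γ_n = γ_{n+1} γ_n - γ_n γ_{n-1}` (for `n ≥ 2`) is equivalent to the bilinear system
`(H_n^{(0)})⁻¹ ∂_t H_n^{(0)} - (H_{n-1}^{(1)})⁻¹ ∂_t H_{n-1}^{(1)}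
   = (H_n^{(0)})⁻¹ H_n^{(1)} - (H_{n-1}^{(0)})⁻¹ H_{n-1}^{(1)}` and
`(H_n^{(1)})⁻¹ ∂_t H_n^{(1)} - (H_n^{(0)})⁻¹ ∂_t H_n^{(0)}
   = (H_n^{(1)})⁻¹ H_{n+1}^{(0)} - (H_{n-1}^{(1)})⁻¹ H_n^{(0)}` (for `n ≥ 1`). -/
theorem stmt19 {p : ℕ} (H0 H1 : ℕ → ℝ → Matrix (Fin p) (Fin p) ℝ)
    (γ : ℕ → ℝ → Matrix (Fin p) (Fin p) ℝ)
    (hsm0 : ∀ n t i j, DifferentiableAt ℝ (fun s => H0 n s i j) t)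
    (hsm1 : ∀ n t i j, DifferentiableAt ℝ (fun s => H1 n s i j) t)
    (hU0 : ∀ n t, IsUnit (H0 n t)) (hU1 : ∀ n t, IsUnit (H1 n t))
    (hγe : ∀ (n : ℕ) t, 1 ≤ n → γ (2 * n) t = H0 n t * Ring.inverse (H1 (n - 1) t))
    (hγo : ∀ (n : ℕ) t, γ (2 * n + 1) t = H1 n t * Ring.inverse (H0 n t)) :
    (∀ (m : ℕ) t, 2 ≤ m →
        matDeriv19 (γ m) t = γ (m + 1) t * γ m t - γ m t * γ (m - 1) t)
    ↔ (∀ (n : ℕ) t, 1 ≤ n →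
        (Ring.inverse (H0 n t) * matDeriv19 (H0 n) t
            - Ring.inverse (H1 (n - 1) t) * matDeriv19 (H1 (n - 1)) t
          = Ring.inverse (H0 n t) * H1 n t
            - Ring.inverse (H0 (n - 1) t) * H1 (n - 1) t) ∧
        (Ring.inverse (H1 n t) * matDeriv19 (H1 n) t
            - Ring.inverse (H0 n t) * matDeriv19 (H0 n) t
          = Ring.inverse (H1 n t) * H0 (n + 1) t
            - Ring.inverse (H1 (n - 1) t) * H0 n t)) := by
  -- derivative of even γ's
  have hdE : ∀ (n : ℕ) t, 1 ≤ n → matDeriv19 (γ (2 * n)) t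
      = matDeriv19 (H0 n) t * Ring.inverse (H1 (n - 1) t)
        - H0 n t * Ring.inverse (H1 (n - 1) t) * matDeriv19 (H1 (n - 1)) t
          * Ring.inverse (H1 (n - 1) t) := by
    intro n t hn
    rw [show γ (2 * n) = fun s => H0 n s * Ring.inverse (H1 (n - 1) s) from
      funext fun s => hγe n s hn]
    exact matDeriv19_mul_inv _ _ _ (fun i j => hsm0 n t i j) (fun i j => hsm1 (n - 1) t i j) (hU1 (n - 1))
  have hdO : ∀ (n : ℕ) t, matDeriv19 (γ (2 * n + 1)) t
      = matDeriv19 (H1 n) t * Ring.inverse (H0 n t)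
        - H1 n t * Ring.inverse (H0 n t) * matDeriv19 (H0 n) t * Ring.inverse (H0 n t) := by
    intro n t
    rw [show γ (2 * n + 1) = fun s => H1 n s * Ring.inverse (H0 n s) from
      funext fun s => hγo n s]
    exact matDeriv19_mul_inv _ _ _ (fun i j => hsm1 n t i j) (fun i j => hsm0 n t i j) (hU0 n)
  constructor
  · intro hV n t hn
    constructor
    · have hV1 := hV (2 * n) t (by omega)
      rw [hdE n t hn, hγo n t, show 2 * n - 1 = 2 * (n - 1) + 1 by omega,
        hγo (n - 1) t, hγe n t hn] at hV1
      exact (volterra_aux19 (H0 n t) (H1 (n - 1) t) (H1 n t) (H0 (n - 1) t)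
        (matDeriv19 (H0 n) t) (matDeriv19 (H1 (n - 1)) t) (hU0 n t) (hU1 (n - 1) t)).mp hV1
    · have hV2 := hV (2 * n + 1) t (by omega)
      rw [hdO n t, show 2 * n + 1 + 1 = 2 * (n + 1) by ring,
        hγe (n + 1) t (by omega), Nat.add_sub_cancel, hγo n t,
        show 2 * n + 1 - 1 = 2 * n by omega, hγe n t hn] at hV2
      exact (volterra_aux19 (H1 n t) (H0 n t) (H0 (n + 1) t) (H1 (n - 1) t)
        (matDeriv19 (H1 n) t) (matDeriv19 (H0 n) t) (hU1 n t) (hU0 n t)).mp hV2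
  · intro hE m t hm
    rcases Nat.even_or_odd m with ⟨k, hk⟩ | ⟨k, hk⟩
    · have hk' : m = 2 * k := by omega
      subst hk'
      have hkn : 1 ≤ k := by omega
      obtain ⟨h1, _⟩ := hE k t hkn
      rw [hdE k t hkn, hγo k t, show 2 * k - 1 = 2 * (k - 1) + 1 by omega,
        hγo (k - 1) t, hγe k t hkn]
      exact (volterra_aux19 (H0 k t) (H1 (k - 1) t) (H1 k t) (H0 (k - 1) t)
        (matDeriv19 (H0 k) t) (matDeriv19 (H1 (k - 1)) t) (hU0 k t) (hU1 (k - 1) t)).mpr h1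
    · have hk' : m = 2 * k + 1 := by omega
      subst hk'
      have hkn : 1 ≤ k := by omega
      obtain ⟨_, h2⟩ := hE k t hkn
      rw [hdO k t, show 2 * k + 1 + 1 = 2 * (k + 1) by ring,
        hγe (k + 1) t (by omega), Nat.add_sub_cancel, hγo k t,
        show 2 * k + 1 - 1 = 2 * k by omega, hγe k t hkn]
      exact (volterra_aux19 (H1 k t) (H0 k t) (H0 (k + 1) t) (H1 (k - 1) t)
        (matDeriv19 (H1 k) t) (matDeriv19 (H0 k) t) (hU1 k t) (hU0 k t)).mpr h2
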